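/- Suppose u is r0 + 1 times continuously differentiable on an open interval containing x̄. Then there exist constants C > 0 and h₀ > 0 such that for every 0 < h < h₀ and every 0 ≤ k ≤ R − r0, the smoothness indicator satisfies I_k ≤ C h². -/
import Mathlib
set_option maxHeartbeats 1000000


open Finset

/-- The equispaced stencil node `x_j = x̄ + j·h` (here `xb` denotes `x̄`). -/
noncomputable def stencil (xb h : ℝ) (j : ℕ) : ℝ := xb + j * h

/-- `interpPoly r0 xb h u k` is the unique polynomial of degree at most `r0`
interpolating `u` at the nodes `x_k, …, x_{k+r0}`. -/
noncomputable def interpPoly (r0 : ℕ) (xb h : ℝ) (u : ℝ → ℝ) (k : ℕ) : Polynomial ℝ :=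
  Lagrange.interpolate (Finset.range (r0 + 1)) (fun j => stencil xb h (k + j))
    (fun j => u (stencil xb h (k + j)))

/-- The smoothness indicator
`I_k = (1/r0) · ∑_{ℓ=1}^{r0} h^{2ℓ−1} ∫_{x_0}^{x_R} (p_k^{(ℓ)}(x))² dx`. -/
noncomputable def smoothInd (r0 R : ℕ) (xb h : ℝ) (u : ℝ → ℝ) (k : ℕ) : ℝ :=
  (1 / (r0 : ℝ)) * ∑ ℓ ∈ Finset.Icc 1 r0,
    h ^ (2 * ℓ - 1) *
      ∫ t in (stencil xb h 0)..(stencil xb h R),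
        ((Polynomial.derivative^[ℓ] (interpPoly r0 xb h u k)).eval t) ^ 2

section Aux

open Polynomial

lemma iterDeriv_sum {ι : Type*} (s : Finset ι) (f : ι → Polynomial ℝ) (n : ℕ) :
    Polynomial.derivative^[n] (∑ i ∈ s, f i) = ∑ i ∈ s, Polynomial.derivative^[n] (f i) := by
  induction n with
  | zero => simp
  | succ n ih => rw [Function.iterate_succ_apply', ih, map_sum]
               ; simp [Function.iterate_succ_apply']

lemma iterDeriv_add (p q : Polynomial ℝ) (n : ℕ) :
    Polynomial.derivative^[n] (p + q) =
      Polynomial.derivative^[n] p + Polynomial.derivative^[n] q := by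
  induction n generalizing p q with
  | zero => simp
  | succ n ih => simp only [Function.iterate_succ_apply, map_add, ih]

lemma iterDeriv_comp_affine (P : Polynomial ℝ) (c d : ℝ) (n : ℕ) :
    Polynomial.derivative^[n] (P.comp (C c * X + C d)) =
      C (c ^ n) * (Polynomial.derivative^[n] P).comp (C c * X + C d) := by
  induction n generalizing P with
  | zero => simp
  | succ n ih =>
      rw [Function.iterate_succ_apply, derivative_comp]
      have hg : Polynomial.derivative (C c * X + C d) = C c := by simp
      rw [hg, Polynomial.iterate_derivative_C_mul, ih, ← mul_assoc, ← C_mul, ← pow_succ',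
        Function.iterate_succ_apply]

lemma affine_factor (c e y : ℝ) (hc : c ≠ 0) :
    C c * X + C e - C y = C c * (X - C ((y - e) / c)) := by
  rw [mul_sub, ← C_mul, mul_div_cancel₀ _ hc, C_sub]
  ring

lemma basis_comp (r0 : ℕ) (xb h : ℝ) (hh : h ≠ 0) (k j : ℕ) :
    Lagrange.basis (range (r0 + 1)) (fun i => stencil xb h (k + i)) j
      = (Lagrange.basis (range (r0 + 1)) (fun i => (i : ℝ)) j).comp
          (C h⁻¹ * X + C (-(h⁻¹ * stencil xb h k))) := by
  unfold Lagrange.basis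
  rw [Polynomial.prod_comp]
  refine Finset.prod_congr rfl fun i hi => ?_
  have hij : (j : ℝ) ≠ (i : ℝ) := by
    have h1 : i ≠ j := (Finset.mem_erase.mp hi).1
    exact_mod_cast fun hx => h1 (by exact_mod_cast hx.symm)
  unfold Lagrange.basisDivisor
  rw [Polynomial.mul_comp, Polynomial.C_comp, Polynomial.sub_comp, Polynomial.X_comp,
    Polynomial.C_comp]
  rw [affine_factor h⁻¹ (-(h⁻¹ * stencil xb h k)) (i : ℝ) (inv_ne_zero hh)]
  have h2 : ((i : ℝ) - -(h⁻¹ * stencil xb h k)) / h⁻¹ = stencil xb h (k + i) := by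
    simp only [stencil]
    push_cast
    field_simp
    ring
  rw [h2, ← mul_assoc, ← C_mul]
  congr 2
  have h3 : stencil xb h (k + j) - stencil xb h (k + i) = ((j : ℝ) - i) * h := by
    simp only [stencil]; push_cast; ring
  rw [h3, mul_inv]

lemma stencil_injOn (xb h : ℝ) (hh : h ≠ 0) (k m : ℕ) :
    Set.InjOn (fun i : ℕ => stencil xb h (k + i)) (range m) := by
  intro x _ y _ hxy
  simp only [stencil] at hxy
  have : ((k + x : ℕ) : ℝ) * h = ((k + y : ℕ) : ℝ) * h := by linarith
  have := mul_right_cancel₀ hh this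
  have hxy2 : k + x = k + y := by exact_mod_cast this
  omega

lemma interp_iterDeriv (r0 : ℕ) (xb h : ℝ) (hh : h ≠ 0) (u : ℝ → ℝ) (k n : ℕ) (hn : 1 ≤ n) :
    Polynomial.derivative^[n] (interpPoly r0 xb h u k) =
      ∑ j ∈ range (r0 + 1), C (u (stencil xb h (k + j)) - u (stencil xb h k)) *
        Polynomial.derivative^[n]
          (Lagrange.basis (range (r0 + 1)) (fun i => stencil xb h (k + i)) j) := by
  have hinj := stencil_injOn xb h hh k (r0 + 1)
  have hne : (range (r0 + 1)).Nonempty := nonempty_range_iff.mpr (Nat.succ_ne_zero r0)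
  have hsplit : interpPoly r0 xb h u k =
      (∑ j ∈ range (r0 + 1), C (u (stencil xb h (k + j)) - u (stencil xb h k)) *
        Lagrange.basis (range (r0 + 1)) (fun i => stencil xb h (k + i)) j)
      + C (u (stencil xb h k)) := by
    rw [interpPoly, Lagrange.interpolate_apply]
    have : ∀ j ∈ range (r0 + 1),
        C (u (stencil xb h (k + j))) *
          Lagrange.basis (range (r0 + 1)) (fun i => stencil xb h (k + i)) j
        = C (u (stencil xb h (k + j)) - u (stencil xb h k)) *
            Lagrange.basis (range (r0 + 1)) (fun i => stencil xb h (k + i)) j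
          + C (u (stencil xb h k)) *
            Lagrange.basis (range (r0 + 1)) (fun i => stencil xb h (k + i)) j := by
      intro j _
      rw [← add_mul, ← C_add, sub_add_cancel]
    rw [Finset.sum_congr rfl this, Finset.sum_add_distrib, ← Finset.mul_sum,
      Lagrange.sum_basis hinj hne, mul_one]
  rw [hsplit, iterDeriv_add, Polynomial.iterate_derivative_C hn, add_zero, iterDeriv_sum]
  refine Finset.sum_congr rfl fun j _ => ?_
  rw [Polynomial.iterate_derivative_C_mul]

noncomputable def polyBnd (R : ℕ) (p : Polynomial ℝ) : ℝ :=
  ∑ i ∈ range (p.natDegree + 1), |p.coeff i| * (R : ℝ) ^ i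

lemma polyBnd_nonneg (R : ℕ) (p : Polynomial ℝ) : 0 ≤ polyBnd R p :=
  Finset.sum_nonneg fun i _ => mul_nonneg (abs_nonneg _) (pow_nonneg (Nat.cast_nonneg R) i)

lemma abs_eval_le_polyBnd (R : ℕ) (p : Polynomial ℝ) (s : ℝ) (hs : |s| ≤ (R : ℝ)) :
    |p.eval s| ≤ polyBnd R p := by
  rw [Polynomial.eval_eq_sum_range]
  refine (Finset.abs_sum_le_sum_abs _ _).trans (Finset.sum_le_sum fun i _ => ?_)
  rw [abs_mul, abs_pow]
  exact mul_le_mul_of_nonneg_left (pow_le_pow_left₀ (abs_nonneg s) hs i) (abs_nonneg _)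

lemma pow_algebra (h C1 : ℝ) (hh : h ≠ 0) (R : ℕ) (n : ℕ) (hn : 1 ≤ n) :
    h ^ (2 * n - 1) * ((C1 * h * h⁻¹ ^ n) ^ 2 * ((R : ℝ) * h)) = C1 ^ 2 * (R : ℝ) * h ^ 2 := by
  obtain ⟨m, rfl⟩ : ∃ m, n = m + 1 := ⟨n - 1, by omega⟩
  have h1 : 2 * (m + 1) - 1 = 2 * m + 1 := by omega
  rw [h1, inv_pow]
  field_simp
  ring

end Aux

/-- if `u` is `r0 + 1` times continuously differentiable on an open
interval containing `x̄`, then there are `C > 0` and `h₀ > 0` such that for every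
`0 < h < h₀` and every `0 ≤ k ≤ R − r0`, the smoothness indicator satisfies
`I_k ≤ C h²`. -/
theorem smoothInd_le_of_smooth (r0 R : ℕ) (hr0 : 1 ≤ r0) (hR : r0 ≤ R)
    (u : ℝ → ℝ) (xb a b : ℝ) (ha : a < xb) (hb : xb < b)
    (hu : ContDiffOn ℝ (r0 + 1) u (Set.Ioo a b)) :
    ∃ C > 0, ∃ h₀ > 0, ∀ h, 0 < h → h < h₀ →
      ∀ k ≤ R - r0, smoothInd r0 R xb h u k ≤ C * h ^ 2 := by
  classical
  have hx1 : ContDiffAt ℝ 1 u xb :=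
    (hu.contDiffAt (Ioo_mem_nhds ha hb)).of_le
      (by exact_mod_cast Nat.succ_le_succ (Nat.zero_le r0))
  obtain ⟨K, t, ht, hK⟩ := hx1.exists_lipschitzOnWith
  obtain ⟨ε, hε, hball⟩ := Metric.mem_nhds_iff.mp ht
  set M : ℝ := ∑ j ∈ range (r0 + 1), ∑ n ∈ range (r0 + 1),
      polyBnd R (Polynomial.derivative^[n]
        (Lagrange.basis (range (r0 + 1)) (fun i => (i : ℝ)) j)) with hM
  have hMnn : 0 ≤ M :=
    Finset.sum_nonneg fun j _ => Finset.sum_nonneg fun n _ => polyBnd_nonneg _ _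
  have hMb : ∀ j ∈ range (r0 + 1), ∀ n ∈ range (r0 + 1),
      polyBnd R (Polynomial.derivative^[n]
        (Lagrange.basis (range (r0 + 1)) (fun i => (i : ℝ)) j)) ≤ M := by
    intro j hj n hn
    calc polyBnd R (Polynomial.derivative^[n]
          (Lagrange.basis (range (r0 + 1)) (fun i => (i : ℝ)) j))
        ≤ ∑ n ∈ range (r0 + 1), polyBnd R (Polynomial.derivative^[n]
            (Lagrange.basis (range (r0 + 1)) (fun i => (i : ℝ)) j)) :=
          Finset.single_le_sum (f := fun m => polyBnd R (Polynomial.derivative^[m]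
            (Lagrange.basis (range (r0 + 1)) (fun i => (i : ℝ)) j)))
            (fun m _ => polyBnd_nonneg _ _) hn
      _ ≤ M := Finset.single_le_sum (f := fun j => ∑ n ∈ range (r0 + 1),
            polyBnd R (Polynomial.derivative^[n]
              (Lagrange.basis (range (r0 + 1)) (fun i => (i : ℝ)) j)))
            (fun m _ => Finset.sum_nonneg fun n _ => polyBnd_nonneg _ _) hj
  set C1 : ℝ := ((r0 : ℝ) + 1) * ((r0 : ℝ) * (K : ℝ) * M) with hC1
  have hC1nn : 0 ≤ C1 := by positivity
  refine ⟨C1 ^ 2 * (R : ℝ) + 1, by positivity, ε / ((R : ℝ) + 1), by positivity, ?_⟩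
  intro h hpos hlt k hk
  have hh : h ≠ 0 := ne_of_gt hpos
  have hkR : k + r0 ≤ R := by omega
  -- membership of stencil points in `t`
  have hmem : ∀ m : ℕ, (m : ℝ) ≤ (R : ℝ) → stencil xb h m ∈ t := by
    intro m hm
    apply hball
    simp only [Metric.mem_ball, stencil, Real.dist_eq, add_sub_cancel_left]
    rw [abs_of_nonneg (mul_nonneg (Nat.cast_nonneg m) hpos.le)]
    have h1 : (m : ℝ) * h ≤ (R : ℝ) * h := by nlinarith
    have h2 : ((R : ℝ) + 1) * h < ε := by
      calc ((R : ℝ) + 1) * h < ((R : ℝ) + 1) * (ε / ((R : ℝ) + 1)) :=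
            mul_lt_mul_of_pos_left hlt (by positivity)
        _ = ε := by field_simp
    nlinarith
  -- Lipschitz bound on nodal differences
  have hLip : ∀ j ∈ range (r0 + 1),
      |u (stencil xb h (k + j)) - u (stencil xb h k)| ≤ (K : ℝ) * ((r0 : ℝ) * h) := by
    intro j hj
    have hjn : j ≤ r0 := Nat.lt_succ_iff.mp (mem_range.mp hj)
    have hjr : (j : ℝ) ≤ (r0 : ℝ) := by exact_mod_cast hjn
    have hm1 : stencil xb h (k + j) ∈ t := by
      apply hmem; exact_mod_cast (by omega : k + j ≤ R)
    have hm2 : stencil xb h k ∈ t := by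
      apply hmem; exact_mod_cast (by omega : k ≤ R)
    have := hK.dist_le_mul _ hm1 _ hm2
    rw [Real.dist_eq, Real.dist_eq] at this
    have hd : stencil xb h (k + j) - stencil xb h k = (j : ℝ) * h := by
      simp only [stencil]; push_cast; ring
    rw [hd, abs_of_nonneg (mul_nonneg (Nat.cast_nonneg j) hpos.le)] at this
    refine this.trans ?_
    have : (K : ℝ) * ((j : ℝ) * h) ≤ (K : ℝ) * ((r0 : ℝ) * h) := by
      apply mul_le_mul_of_nonneg_left _ (K.coe_nonneg)
      nlinarith
    exact this
  -- pointwise bound on derivative evaluations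
  have hEval : ∀ n, 1 ≤ n → n ≤ r0 → ∀ t' ∈ Set.uIoc (stencil xb h 0) (stencil xb h R),
      |(Polynomial.derivative^[n] (interpPoly r0 xb h u k)).eval t'| ≤ C1 * h * h⁻¹ ^ n := by
    intro n hn1 hnr t' ht'
    have hx0R : stencil xb h 0 ≤ stencil xb h R := by
      simp only [stencil]; push_cast
      nlinarith [Nat.cast_nonneg (α := ℝ) R]
    rw [Set.uIoc_of_le hx0R] at ht'
    obtain ⟨ht'l, ht'r⟩ := ht'
    simp only [stencil, Nat.cast_zero, zero_mul, add_zero] at ht'l ht'r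
    rw [interp_iterDeriv r0 xb h hh u k n hn1, Polynomial.eval_finset_sum]
    refine (Finset.abs_sum_le_sum_abs _ _).trans ?_
    have hterm : ∀ j ∈ range (r0 + 1),
        |Polynomial.eval t' (Polynomial.C (u (stencil xb h (k + j)) - u (stencil xb h k)) *
          Polynomial.derivative^[n]
            (Lagrange.basis (range (r0 + 1)) (fun i => stencil xb h (k + i)) j))|
          ≤ ((K : ℝ) * ((r0 : ℝ) * h)) * (h⁻¹ ^ n * M) := by
      intro j hj
      rw [Polynomial.eval_mul, Polynomial.eval_C, abs_mul]
      apply mul_le_mul (hLip j hj) _ (abs_nonneg _)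
        (mul_nonneg (NNReal.coe_nonneg K) (mul_nonneg (Nat.cast_nonneg r0) hpos.le))
      rw [basis_comp r0 xb h hh k j, iterDeriv_comp_affine, Polynomial.eval_mul,
        Polynomial.eval_C, Polynomial.eval_comp]
      rw [abs_mul]
      have hs : |Polynomial.eval t'
          (Polynomial.C h⁻¹ * Polynomial.X + Polynomial.C (-(h⁻¹ * stencil xb h k)))| ≤ (R : ℝ) := by
        simp only [Polynomial.eval_add, Polynomial.eval_mul, Polynomial.eval_C,
          Polynomial.eval_X, stencil]
        have hkRc : (k : ℝ) ≤ (R : ℝ) := by exact_mod_cast (by omega : k ≤ R)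
        have hinv : 0 < h⁻¹ := inv_pos.mpr hpos
        have e1 : h⁻¹ * t' + -(h⁻¹ * (xb + (k : ℝ) * h)) = h⁻¹ * (t' - xb) - (k : ℝ) := by
          field_simp; ring
        rw [e1, abs_le]
        have hb1 : h⁻¹ * (t' - xb) ≤ (R : ℝ) := by
          rw [inv_mul_le_iff₀ hpos]
          nlinarith
        have hb2 : 0 < h⁻¹ * (t' - xb) := by
          apply mul_pos hinv; linarith
        constructor <;> nlinarith
      have hinvn : (0:ℝ) ≤ h⁻¹ ^ n := pow_nonneg (inv_nonneg.mpr hpos.le) n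
      rw [abs_of_nonneg hinvn]
      apply mul_le_mul_of_nonneg_left _ hinvn
      exact (abs_eval_le_polyBnd R _ _ hs).trans
        (hMb j hj n (mem_range.mpr (by omega)))
    refine (Finset.sum_le_sum hterm).trans ?_
    rw [Finset.sum_const, card_range, nsmul_eq_mul]
    push_cast
    rw [hC1]
    ring_nf
    nlinarith [sq_nonneg h]
  -- bound each integral
  have hInt : ∀ n, 1 ≤ n → n ≤ r0 →
      (∫ t' in (stencil xb h 0)..(stencil xb h R),
        ((Polynomial.derivative^[n] (interpPoly r0 xb h u k)).eval t') ^ 2)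
      ≤ (C1 * h * h⁻¹ ^ n) ^ 2 * ((R : ℝ) * h) := by
    intro n hn1 hnr
    have hb2 : ∀ t' ∈ Set.uIoc (stencil xb h 0) (stencil xb h R),
        ‖((Polynomial.derivative^[n] (interpPoly r0 xb h u k)).eval t') ^ 2‖
          ≤ (C1 * h * h⁻¹ ^ n) ^ 2 := by
      intro t' ht'
      rw [Real.norm_eq_abs, abs_pow]
      exact pow_le_pow_left₀ (abs_nonneg _) (hEval n hn1 hnr t' ht') 2
    have hni := intervalIntegral.norm_integral_le_of_norm_le_const hb2
    rw [Real.norm_eq_abs] at hni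
    have hd0 : stencil xb h R - stencil xb h 0 = (R : ℝ) * h := by
      simp [stencil]
    rw [hd0, abs_of_nonneg (mul_nonneg (Nat.cast_nonneg R) hpos.le)] at hni
    exact (le_abs_self _).trans hni
  have hterm2 : ∀ n ∈ Finset.Icc 1 r0,
      h ^ (2 * n - 1) * (∫ t' in (stencil xb h 0)..(stencil xb h R),
        ((Polynomial.derivative^[n] (interpPoly r0 xb h u k)).eval t') ^ 2)
      ≤ C1 ^ 2 * (R : ℝ) * h ^ 2 := by
    intro n hn
    obtain ⟨hn1, hnr⟩ := Finset.mem_Icc.mp hn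
    calc h ^ (2 * n - 1) * (∫ t' in (stencil xb h 0)..(stencil xb h R),
          ((Polynomial.derivative^[n] (interpPoly r0 xb h u k)).eval t') ^ 2)
        ≤ h ^ (2 * n - 1) * ((C1 * h * h⁻¹ ^ n) ^ 2 * ((R : ℝ) * h)) :=
          mul_le_mul_of_nonneg_left (hInt n hn1 hnr) (pow_nonneg hpos.le _)
      _ = C1 ^ 2 * (R : ℝ) * h ^ 2 := pow_algebra h C1 hh R n hn1
  have hr0ne : (r0 : ℝ) ≠ 0 := by exact_mod_cast Nat.one_le_iff_ne_zero.mp hr0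
  unfold smoothInd
  calc (1 / (r0 : ℝ)) * ∑ n ∈ Finset.Icc 1 r0,
        h ^ (2 * n - 1) * (∫ t' in (stencil xb h 0)..(stencil xb h R),
          ((Polynomial.derivative^[n] (interpPoly r0 xb h u k)).eval t') ^ 2)
      ≤ (1 / (r0 : ℝ)) * ((r0 : ℝ) * (C1 ^ 2 * (R : ℝ) * h ^ 2)) := by
        apply mul_le_mul_of_nonneg_left _ (by positivity)
        refine (Finset.sum_le_sum hterm2).trans ?_
        rw [Finset.sum_const, Nat.card_Icc, nsmul_eq_mul]
        norm_num
    _ = C1 ^ 2 * (R : ℝ) * h ^ 2 := by field_simp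
    _ ≤ (C1 ^ 2 * (R : ℝ) + 1) * h ^ 2 := by nlinarith [sq_nonneg h]
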